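/- Let I be a set and E ⊆ 𝒫(I), and suppose there exists J ⊆ I such that neither J nor I \ J belongs to E. If a topological space X satisfies the E-accumulation property, then for every pair of distinct points x, y ∈ X there is a point z ∈ X such that every open neighborhood of z contains both x and y. -/

import Mathlib

/-- `z` is an `E`-accumulation point of the `I`-indexed sequence `x`. -/
def IsAccPt {I X : Type*} [TopologicalSpace X] (E : Set (Set I)) (x : I → X) (z : X) : Prop :=
  ∀ U : Set X, IsOpen U → z ∈ U → {i | x i ∈ U} ∈ E

/-- `X` satisfies the `E`-accumulation property. -/
def AccProp {I : Type*} (X : Type*) [TopologicalSpace X] (E : Set (Set I)) : Prop :=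
  ∀ x : I → X, ∃ z : X, IsAccPt E x z

/-- A filter in the classical sense: a nonempty proper family closed under
finite intersections and supersets. -/
structure IsSetFilter {I : Type*} (F : Set (Set I)) : Prop where
  nonempty : F.Nonempty
  proper : (∅ : Set I) ∉ F
  inter : ∀ A ∈ F, ∀ B ∈ F, A ∩ B ∈ F
  mono : ∀ A ∈ F, ∀ B : Set I, A ⊆ B → B ∈ F

/-- A (set-)ultrafilter: a filter containing one of `J`, `Jᶜ` for every `J`. -/
def IsSetUltrafilter {I : Type*} (F : Set (Set I)) : Prop :=
  IsSetFilter F ∧ ∀ J : Set I, J ∈ F ∨ Jᶜ ∈ F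

/-- The order type of a subset of a well-ordered type, with the inherited order. -/
noncomputable def setOType {β : Type*} [LinearOrder β] [WellFoundedLT β] (S : Set β) : Ordinal :=
  Ordinal.type ((· < ·) : S → S → Prop)

/-- `X` satisfies the `α`-complete accumulation property `CAP*_α`: every `α`-indexed
sequence has a point all of whose open neighborhoods pick out a set of indices of
order type `α`. -/
def CAPstar (α : Ordinal) (X : Type*) [TopologicalSpace X] : Prop :=
  ∀ x : α.ToType → X, ∃ z : X, ∀ U : Set X, IsOpen U → z ∈ U →
    setOType {γ : α.ToType | x γ ∈ U} = α

theorem stmt16 {I : Type*} (E : Set (Set I)) (J : Set I)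
    (hJ : J ∉ E) (hJc : Jᶜ ∉ E)
    (X : Type*) [TopologicalSpace X] (h : AccProp X E) :
    ∀ x y : X, x ≠ y → ∃ z : X, ∀ U : Set X, IsOpen U → z ∈ U → x ∈ U ∧ y ∈ U := by
  intro x y hxy
  classical
  obtain ⟨z, hz⟩ := h (fun i => if i ∈ J then x else y)
  have key : ∀ U : Set X, IsOpen U → z ∈ U → (x ∈ U ↔ y ∈ U) := by
    intro U hU hzU
    have hE := hz U hU hzU
    constructor
    · intro hx
      by_contra hy
      apply hJ
      convert hE using 1
      ext i
      simp only [Set.mem_setOf_eq]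
      by_cases hi : i ∈ J <;> simp [hi, hx, hy]
    · intro hy
      by_contra hx
      apply hJc
      convert hE using 1
      ext i
      simp only [Set.mem_compl_iff, Set.mem_setOf_eq]
      by_cases hi : i ∈ J <;> simp [hi, hx, hy]
  by_cases hall : ∀ U : Set X, IsOpen U → z ∈ U → x ∈ U
  · exact ⟨z, fun U hU hzU => ⟨hall U hU hzU, (key U hU hzU).1 (hall U hU hzU)⟩⟩
  · push_neg at hall
    obtain ⟨W, hW, hzW, hxW⟩ := hall
    have hyW : y ∉ W := fun hy => hxW ((key W hW hzW).2 hy)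
    refine ⟨x, fun U hU hxU => ⟨hxU, ?_⟩⟩
    have : y ∈ U ∪ W := (key (U ∪ W) (hU.union hW) (Or.inr hzW)).1 (Or.inl hxU)
    exact this.resolve_right hyW
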